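/- Let n and d be positive integers, let 0 < ε < 1 be a real number, and let G be an (n,d)-Ramanujan graph. If A and B are disjoint sets of vertices of G with |A| = ε·n and |B| > 4n/(d·ε), then there exists an edge of G connecting a vertex of A to a vertex of B. -/

import Mathlib

open Finset

/-- A simple graph `G` on a finite vertex set of cardinality `n` is `(n,d)`-Ramanujan
if it is `d`-regular and every real vector `x` on the vertices whose coordinates sum
to `0` satisfies `‖Ax‖₂ ≤ 2√(d−1)·‖x‖₂`, where `A` is the adjacency matrix of `G`. -/
def IsRamanujan {V : Type*} [Fintype V] [DecidableEq V] (n d : ℕ)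
    (G : SimpleGraph V) [DecidableRel G.Adj] : Prop :=
  Fintype.card V = n ∧ G.IsRegularOfDegree d ∧
    ∀ x : V → ℝ, (∑ v, x v) = 0 →
      Real.sqrt (∑ v, ((G.adjMatrix ℝ).mulVec x v) ^ 2) ≤
        2 * Real.sqrt ((d : ℝ) - 1) * Real.sqrt (∑ v, (x v) ^ 2)

set_option maxHeartbeats 1000000 in
/-- in an `(n,d)`-Ramanujan graph, if `A` and `B` are disjoint vertex sets
with `|A| = ε·n` and `|B| > 4n/(d·ε)` for some `0 < ε < 1`, then some edge of `G`
connects a vertex of `A` to a vertex of `B`. -/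
theorem ramanujan_unbalanced_expansion {V : Type*} [Fintype V] [DecidableEq V]
    (n d : ℕ) (hn : 0 < n) (hd : 0 < d) (ε : ℝ) (hε0 : 0 < ε) (hε1 : ε < 1)
    (G : SimpleGraph V) [DecidableRel G.Adj] (hG : IsRamanujan n d G)
    (A B : Finset V) (hdisj : Disjoint A B)
    (hA : (A.card : ℝ) = ε * n)
    (hB : 4 * (n : ℝ) / ((d : ℝ) * ε) < B.card) :
    ∃ a ∈ A, ∃ b ∈ B, G.Adj a b := by
  by_contra hcon
  push_neg at hcon
  obtain ⟨hcard, hreg, hspec⟩ := hG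
  have hn' : (0:ℝ) < n := by exact_mod_cast hn
  have hd' : (1:ℝ) ≤ d := by exact_mod_cast hd
  set b : ℝ := (B.card : ℝ) with hbdef
  set a : ℝ := (A.card : ℝ) with hadef
  have hb0 : 0 < b := lt_of_le_of_lt (by positivity) hB
  have ha0 : 0 ≤ a := by positivity
  set x : V → ℝ := fun v => (if v ∈ B then (1:ℝ) else 0) - b / n with hxdef
  have hsum : ∑ v, x v = 0 := by
    simp only [hxdef, Finset.sum_sub_distrib, Finset.sum_boole, Finset.sum_const,
      Finset.card_univ, hcard, nsmul_eq_mul]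
    have : (Finset.univ.filter (· ∈ B)) = B := by
      ext v; simp
    rw [this, ← hbdef]
    field_simp
    ring
  have hAx : ∀ v ∈ A, (G.adjMatrix ℝ).mulVec x v = -(d * b / n) := by
    intro v hv
    rw [SimpleGraph.adjMatrix_mulVec_apply]
    simp only [hxdef, Finset.sum_sub_distrib, Finset.sum_boole, Finset.sum_const,
      nsmul_eq_mul]
    have h1 : ((G.neighborFinset v).filter (· ∈ B)) = ∅ := by
      ext u
      simp only [Finset.mem_filter, SimpleGraph.mem_neighborFinset, Finset.notMem_empty,
        iff_false, not_and]
      intro hadj hu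
      exact hcon v hv u hu hadj
    have hdeg : (G.neighborFinset v).card = d := hreg v
    rw [h1, hdeg]
    simp
    ring
  have hxsq : ∑ v, (x v) ^ 2 ≤ b := by
    have hexp : ∀ v, (x v) ^ 2 =
        (if v ∈ B then (1:ℝ) else 0) - 2 * (b/n) * (if v ∈ B then (1:ℝ) else 0) + (b/n)^2 := by
      intro v
      by_cases h : v ∈ B <;> simp [hxdef, h] <;> ring
    rw [Finset.sum_congr rfl fun v _ => hexp v]
    simp only [Finset.sum_add_distrib, Finset.sum_sub_distrib, Finset.sum_boole,
      ← Finset.mul_sum, Finset.sum_const, Finset.card_univ, hcard, nsmul_eq_mul]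
    have : (Finset.univ.filter (· ∈ B)) = B := by ext v; simp
    rw [this, ← hbdef]
    have : (n:ℝ) * (b/n)^2 = b^2/n := by field_simp
    rw [this]
    have he : 2 * (b / (n:ℝ)) * b = 2 * (b^2 / n) := by field_simp
    have hpos : 0 ≤ b^2 / (n:ℝ) := by positivity
    linarith
  have hlow : a * (d * b / n) ^ 2 ≤ ∑ v, ((G.adjMatrix ℝ).mulVec x v) ^ 2 := by
    calc a * (d * b / n) ^ 2 = ∑ v ∈ A, ((G.adjMatrix ℝ).mulVec x v) ^ 2 := by
          rw [Finset.sum_congr rfl fun v hv => by rw [hAx v hv]]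
          simp [mul_comm]
          exact Or.inl hadef
      _ ≤ ∑ v, ((G.adjMatrix ℝ).mulVec x v) ^ 2 :=
          Finset.sum_le_sum_of_subset_of_nonneg (Finset.subset_univ A)
            (fun i _ _ => sq_nonneg _)
  have hspec' := hspec x hsum
  have hdbn : 0 ≤ d * b / n := by positivity
  have key : Real.sqrt a * (d * b / n) ≤ 2 * Real.sqrt ((d:ℝ) - 1) * Real.sqrt b := by
    calc Real.sqrt a * (d * b / n) = Real.sqrt (a * (d * b / n)^2) := by
          rw [Real.sqrt_mul ha0, Real.sqrt_sq hdbn]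
      _ ≤ Real.sqrt (∑ v, ((G.adjMatrix ℝ).mulVec x v) ^ 2) := Real.sqrt_le_sqrt hlow
      _ ≤ 2 * Real.sqrt ((d:ℝ) - 1) * Real.sqrt (∑ v, (x v) ^ 2) := hspec'
      _ ≤ 2 * Real.sqrt ((d:ℝ) - 1) * Real.sqrt b := by
          have h2 : Real.sqrt (∑ v, (x v)^2) ≤ Real.sqrt b := Real.sqrt_le_sqrt hxsq
          have h3 : (0:ℝ) ≤ 2 * Real.sqrt ((d:ℝ) - 1) := by positivity
          exact mul_le_mul_of_nonneg_left h2 h3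
  have hsq := mul_self_le_mul_self (by positivity) key
  have e1 : Real.sqrt a * Real.sqrt a = a := Real.mul_self_sqrt ha0
  have e2 : Real.sqrt ((d:ℝ)-1) * Real.sqrt ((d:ℝ)-1) = (d:ℝ) - 1 :=
    Real.mul_self_sqrt (by linarith)
  have e3 : Real.sqrt b * Real.sqrt b = b := Real.mul_self_sqrt hb0.le
  have l1 : (Real.sqrt a * (d*b/n)) * (Real.sqrt a * (d*b/n)) = a * (d*b/n)^2 := by
    rw [show (Real.sqrt a * ((d:ℝ)*b/n)) * (Real.sqrt a * ((d:ℝ)*b/n))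
        = (Real.sqrt a * Real.sqrt a) * ((d:ℝ)*b/n)^2 by ring, e1]
  have l2 : (2*Real.sqrt ((d:ℝ)-1)*Real.sqrt b) * (2*Real.sqrt ((d:ℝ)-1)*Real.sqrt b)
      = 4*((d:ℝ)-1)*b := by
    rw [show (2*Real.sqrt ((d:ℝ)-1)*Real.sqrt b) * (2*Real.sqrt ((d:ℝ)-1)*Real.sqrt b)
        = 4*(Real.sqrt ((d:ℝ)-1)*Real.sqrt ((d:ℝ)-1))*(Real.sqrt b*Real.sqrt b) by ring, e2, e3]
  have hfin : a * (d * b / n) ^ 2 ≤ 4 * ((d:ℝ) - 1) * b := by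
    rw [← l1, ← l2]; exact hsq
  -- now derive contradiction
  have hdb : a * (d*b)^2 ≤ 4 * ((d:ℝ)-1) * b * n^2 := by
    have h := mul_le_mul_of_nonneg_right hfin (sq_nonneg (n:ℝ))
    calc a * (d*b)^2 = a * (d*b/n)^2 * n^2 := by field_simp
      _ ≤ _ := h
  have hBd : 4 * (n:ℝ) < (d:ℝ) * ε * b := by
    rw [div_lt_iff₀ (by positivity)] at hB
    linarith [hB]
  rw [hA] at hdb
  have hstep : 4 * ((d:ℝ)-1) * b * n^2 ≤ 4 * (d:ℝ) * b * n^2 := by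
    have h0 : (0:ℝ) ≤ b * n^2 := by positivity
    nlinarith [h0]
  have h4 : ε * n * ((d:ℝ)*b)^2 ≤ 4 * d * b * n^2 := le_trans hdb hstep
  have h5 : ε * d * b ≤ 4 * n := by
    have hpos : (0:ℝ) < d * b * n := by positivity
    have h4' : (ε*d*b) * (d*b*n) ≤ (4*(n:ℝ)) * (d*b*n) := by linear_combination h4
    exact le_of_mul_le_mul_right h4' hpos
  linarith
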